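/- For every integer n ≥ 5, the cycle graph C_n is not a star-1-PCG: there is no weight function w : V(C_n) → ℝ≥0 and interval I ⊆ ℝ≥0 such that for all distinct vertices a,b, {a,b} is an edge of C_n iff w(a)+w(b) ∈ I. -/

import Mathlib

/-- A graph is a star-1-PCG if there are nonnegative vertex weights and one
interval of nonnegative reals such that two distinct vertices are adjacent iff
the sum of their weights lies in the interval. -/
def IsStar1PCG {V : Type*} (G : SimpleGraph V) : Prop :=
  ∃ (w : V → ℝ) (I : Set ℝ),
    (∀ v, 0 ≤ w v) ∧ I.OrdConnected ∧ I ⊆ Set.Ici 0 ∧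
    (∀ a b : V, a ≠ b → (G.Adj a b ↔ w a + w b ∈ I))

open scoped Fin.CommRing

private lemma fin_nat_ne_zero (m k : ℕ) (h0 : 0 < k) (h : k < m + 5) :
    ((k : ℕ) : Fin (m+5)) ≠ 0 := by
  simp [Fin.ext_iff, Fin.val_cast_of_lt h]
  omega

private lemma cycle_adj_iff (m : ℕ) (u v : Fin (m+5)) :
    (SimpleGraph.cycleGraph (m+5)).Adj u v ↔ u = 1 + v ∨ v = 1 + u := by
  rw [SimpleGraph.cycleGraph_adj (n := m+3), sub_eq_iff_eq_add, sub_eq_iff_eq_add]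

private lemma key (m : ℕ) (w : Fin (m+5) → ℝ) (I : Set ℝ)
    (hI : I.OrdConnected)
    (hadj : ∀ a b : Fin (m+5), a ≠ b →
      ((SimpleGraph.cycleGraph (m+5)).Adj a b ↔ w a + w b ∈ I))
    (x : Fin (m+5))
    (hmin : w x ≤ w (x+2)) (hmax : w (x-1) ≤ w (x+1)) : False := by
  have h1 : ((1 : ℕ) : Fin (m+5)) ≠ 0 := fin_nat_ne_zero m 1 (by norm_num) (by omega)
  have h2 : ((2 : ℕ) : Fin (m+5)) ≠ 0 := fin_nat_ne_zero m 2 (by norm_num) (by omega)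
  have h3 : ((3 : ℕ) : Fin (m+5)) ≠ 0 := fin_nat_ne_zero m 3 (by norm_num) (by omega)
  have h4 : ((4 : ℕ) : Fin (m+5)) ≠ 0 := fin_nat_ne_zero m 4 (by norm_num) (by omega)
  -- edges
  have e1 : w (x-1) + w x ∈ I := by
    refine (hadj _ _ fun h => h1 (by push_cast; linear_combination -h)).mp ?_
    exact (cycle_adj_iff m _ _).mpr (Or.inr (by ring))
  have e2 : w (x+1) + w (x+2) ∈ I := by
    refine (hadj _ _ fun h => h1 (by push_cast; linear_combination -h)).mp ?_
    exact (cycle_adj_iff m _ _).mpr (Or.inr (by ring))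
  have e3 : w (x-2) + w (x-1) ∈ I := by
    refine (hadj _ _ fun h => h1 (by push_cast; linear_combination -h)).mp ?_
    exact (cycle_adj_iff m _ _).mpr (Or.inr (by ring))
  -- non-edges
  have ne1 : w (x+1) + w (x-2) ∉ I := by
    intro hmem
    have hne : x + 1 ≠ x - 2 := fun h => h3 (by push_cast; linear_combination h)
    have := (cycle_adj_iff m _ _).mp ((hadj _ _ hne).mpr hmem)
    rcases this with h | h
    · exact h2 (by push_cast; linear_combination h)
    · exact h4 (by push_cast; linear_combination -h)
  have ne2 : w (x-1) + w (x+2) ∉ I := by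
    intro hmem
    have hne : x - 1 ≠ x + 2 := fun h => h3 (by push_cast; linear_combination -h)
    have := (cycle_adj_iff m _ _).mp ((hadj _ _ hne).mpr hmem)
    rcases this with h | h
    · exact h4 (by push_cast; linear_combination -h)
    · exact h2 (by push_cast; linear_combination h)
  have c1 : w (x+2) < w (x-2) := by
    by_contra hc
    push_neg at hc
    exact ne1 (hI.out e3 e2 ⟨by linarith, by linarith⟩)
  have c2 : w (x-2) < w (x+2) := by
    by_contra hc
    push_neg at hc
    exact ne2 (hI.out e1 e3 ⟨by linarith, by linarith⟩)
  linarith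

theorem stmt1 (n : ℕ) (hn : 5 ≤ n) : ¬ IsStar1PCG (SimpleGraph.cycleGraph n) := by
  obtain ⟨m, rfl⟩ := Nat.exists_eq_add_of_le' hn
  rintro ⟨w, I, h0, hI, hIpos, hadj⟩
  obtain ⟨x, hx⟩ := Finite.exists_min w
  rcases le_total (w (x-1)) (w (x+1)) with h | h
  · exact key m w I hI hadj x (hx _) h
  · refine key m (fun v => w (x + x - v)) I hI ?_ x ?_ ?_
    · intro a b hab
      have hne : x + x - a ≠ x + x - b := fun hh => hab (by linear_combination -hh)
      rw [← hadj _ _ hne, cycle_adj_iff, cycle_adj_iff]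
      constructor
      · rintro (hh | hh)
        · exact Or.inr (by linear_combination hh)
        · exact Or.inl (by linear_combination hh)
      · rintro (hh | hh)
        · exact Or.inr (by linear_combination hh)
        · exact Or.inl (by linear_combination hh)
    · show w (x + x - x) ≤ w (x + x - (x + 2))
      have ha : x + x - x = x := by ring
      have hb : x + x - (x + 2) = x - 2 := by ring
      rw [ha, hb]; exact hx _
    · show w (x + x - (x - 1)) ≤ w (x + x - (x + 1))
      have ha : x + x - (x - 1) = x + 1 := by ring
      have hb : x + x - (x + 1) = x - 1 := by ring
      rw [ha, hb]; exact h
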